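/- Every algebraic function over C(x) (C algebraically closed of characteristic zero) that is integral at every point of C and also integral at infinity (i.e., all its Puiseux series expansions at every point of the projective line have nonnegative starting exponent) is a constant, i.e., an element of C. -/

import Mathlib

set_option synthInstance.maxHeartbeats 1000000
set_option maxHeartbeats 1000000
open Polynomial

/- An algebraic function over C(x) which is integral at every finite place
(equivalently: integral over C[x]) and integral at infinity (integral over the
valuation ring at infinity, {f : intDegree f ≤ 0}) is a constant, i.e. an
element of C. -/
theorem algebraic_integral_everywhere_is_constant
    (C : Type) [Field C] [IsAlgClosed C] [CharZero C]
    (E : Type) [Field E] [Algebra (RatFunc C) E]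
    (u : E) (halg : IsAlgebraic (RatFunc C) u)
    (hfin : ∃ p : Polynomial (RatFunc C), p.Monic ∧
      (∀ i, ∃ a : Polynomial C, p.coeff i = algebraMap (Polynomial C) (RatFunc C) a) ∧
      Polynomial.aeval u p = 0)
    (hinf : ∃ p : Polynomial (RatFunc C), p.Monic ∧
      (∀ i, (p.coeff i).intDegree ≤ 0) ∧ Polynomial.aeval u p = 0) :
    ∃ c : C, u = algebraMap (RatFunc C) E (RatFunc.C c) := by
  classical
  obtain ⟨p, hpm, hpc, hpu⟩ := hfin
  obtain ⟨q, hqm, hqc, hqu⟩ := hinf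
  set K := RatFunc C
  -- algebra structure of E over C[x]
  letI : Algebra (Polynomial C) E :=
    ((algebraMap K E).comp (algebraMap (Polynomial C) K)).toAlgebra
  haveI : IsScalarTower (Polynomial C) K E :=
    IsScalarTower.of_algebraMap_eq fun x => rfl
  -- u is integral over C[x]
  have hp_lifts : p ∈ Polynomial.lifts (algebraMap (Polynomial C) K) := by
    rw [Polynomial.lifts_iff_coeff_lifts]
    intro n; obtain ⟨a, ha⟩ := hpc n; exact ⟨a, ha.symm⟩
  obtain ⟨P, hPmap, _, hPmonic⟩ :=
    Polynomial.lifts_and_degree_eq_and_monic hp_lifts hpm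
  have hintP : IsIntegral (Polynomial C) u := by
    refine ⟨P, hPmonic, ?_⟩
    have : Polynomial.aeval u P = Polynomial.aeval u p := by
      rw [← hPmap, Polynomial.aeval_map_algebraMap]
    rw [← Polynomial.aeval_def, this, hpu]
  -- the valuation ring at infinity
  let v := FunctionField.inftyValuation C
  let O := v.valuationSubring
  letI : Algebra O E := ((algebraMap K E).comp (algebraMap O K)).toAlgebra
  haveI : IsScalarTower O K E := IsScalarTower.of_algebraMap_eq fun x => rfl
  have hv_int : v.Integers O := Valuation.integer.integers v
  haveI : IsIntegrallyClosed O := hv_int.isIntegrallyClosed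
  -- u is integral over O
  have hq_lifts : q ∈ Polynomial.lifts (algebraMap O K) := by
    rw [Polynomial.lifts_iff_coeff_lifts]
    intro n
    have hmem : q.coeff n ∈ O := by
      by_cases h : q.coeff n = 0
      · rw [h]; exact zero_mem _
      · show v (q.coeff n) ≤ 1
        rw [show v (q.coeff n) = RatFunc.inftyValuationDef C (q.coeff n) from rfl,
          FunctionField.inftyValuation_of_nonzero C h]
        have : (Multiplicative.ofAdd (q.coeff n).intDegree : Multiplicative ℤ)
            ≤ Multiplicative.ofAdd (0 : ℤ) := by
          exact Multiplicative.ofAdd_le.mpr (hqc n)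
        exact WithZero.coe_le_coe.mpr this
    exact ⟨⟨q.coeff n, hmem⟩, rfl⟩
  obtain ⟨Q, hQmap, _, hQmonic⟩ :=
    Polynomial.lifts_and_degree_eq_and_monic hq_lifts hqm
  have hintQ : IsIntegral O u := by
    refine ⟨Q, hQmonic, ?_⟩
    have : Polynomial.aeval u Q = Polynomial.aeval u q := by
      rw [← hQmap, Polynomial.aeval_map_algebraMap]
    rw [← Polynomial.aeval_def, this, hqu]
  -- the minimal polynomial over K
  set m := minpoly K u with hm
  have hmK : IsIntegral K u := hintP.tower_top
  have h1 : m = (minpoly (Polynomial C) u).map (algebraMap (Polynomial C) K) :=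
    minpoly.isIntegrallyClosed_eq_field_fractions' K hintP
  have h2 : m = (minpoly O u).map (algebraMap O K) :=
    minpoly.isIntegrallyClosed_eq_field_fractions' K hintQ
  -- every coefficient of m is a constant
  have hcoeff : ∀ i, ∃ c : C, m.coeff i = RatFunc.C c := by
    intro i
    have hc1 : ∃ a : Polynomial C, m.coeff i = algebraMap (Polynomial C) K a := by
      rw [h1]; exact ⟨(minpoly (Polynomial C) u).coeff i, Polynomial.coeff_map _ _⟩
    have hc2 : (m.coeff i).intDegree ≤ 0 := by
      have : m.coeff i ∈ O := by
        rw [h2, Polynomial.coeff_map]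
        exact ((minpoly O u).coeff i).2
      by_cases h : m.coeff i = 0
      · rw [h, RatFunc.intDegree_zero]
      · have := this
        rw [Valuation.mem_valuationSubring_iff,
          show v (m.coeff i) = RatFunc.inftyValuationDef C (m.coeff i) from rfl,
          FunctionField.inftyValuation_of_nonzero C h] at this
        have h1le : (Multiplicative.ofAdd (m.coeff i).intDegree : Multiplicative ℤ)
            ≤ Multiplicative.ofAdd (0 : ℤ) := by
          rw [← WithZero.coe_le_coe]
          exact this
        exact Multiplicative.ofAdd_le.mp h1le
    obtain ⟨a, ha⟩ := hc1
    by_cases h0 : a = 0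
    · exact ⟨0, by rw [ha, h0, map_zero, map_zero]⟩
    · have : (a : Polynomial C).natDegree = 0 := by
        have := hc2
        rw [ha, RatFunc.intDegree_polynomial] at this
        omega
      obtain ⟨c, rfl⟩ : ∃ c, a = Polynomial.C c :=
        ⟨a.coeff 0, Polynomial.eq_C_of_natDegree_eq_zero this⟩
      exact ⟨c, by rw [ha, RatFunc.algebraMap_C]⟩
  -- lift m to a polynomial over C
  have hm_lifts : m ∈ Polynomial.lifts (RatFunc.C : C →+* K) := by
    rw [Polynomial.lifts_iff_coeff_lifts]
    intro n; obtain ⟨c, hc⟩ := hcoeff n; exact ⟨c, hc.symm⟩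
  have hm_monic : m.Monic := minpoly.monic hmK
  obtain ⟨M, hMmap, hMdeg, hMmonic⟩ :=
    Polynomial.lifts_and_degree_eq_and_monic hm_lifts hm_monic
  -- M has positive degree, so a root in C
  have hmdeg : 0 < m.degree := minpoly.degree_pos hmK
  have hMdeg0 : M.degree ≠ 0 := by rw [hMdeg]; exact ne_of_gt hmdeg
  obtain ⟨c, hc⟩ := IsAlgClosed.exists_root M hMdeg0
  -- X - C c divides M, hence X - C (RatFunc.C c) divides m
  have hdvd : (X - Polynomial.C c) ∣ M := dvd_iff_isRoot.mpr hc
  have hdvd' : (X - Polynomial.C (RatFunc.C c)) ∣ m := by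
    rw [← hMmap]
    have := Polynomial.map_dvd (RatFunc.C : C →+* K) hdvd
    simpa using this
  -- m is irreducible, hence m = X - C (RatFunc.C c)
  have hirr : Irreducible m := minpoly.irreducible hmK
  obtain ⟨e, he⟩ := hdvd'
  have hlin : m = X - Polynomial.C (RatFunc.C c) := by
    rcases hirr.isUnit_or_isUnit he with h | h
    · exact absurd h (by
        intro hu
        have := Polynomial.degree_eq_zero_of_isUnit hu
        rw [Polynomial.degree_X_sub_C] at this
        exact one_ne_zero this)
    · obtain ⟨k, hk⟩ := Polynomial.isUnit_iff.mp h
      have hlead : m.leadingCoeff = 1 := hm_monic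
      have hXm : (X - Polynomial.C (RatFunc.C c)).Monic := monic_X_sub_C _
      have : k = 1 := by
        have := congrArg Polynomial.leadingCoeff he
        rw [hlead, ← hk.2, Polynomial.leadingCoeff_mul, hXm.leadingCoeff,
          one_mul, Polynomial.leadingCoeff_C] at this
        exact this.symm
      rw [he, ← hk.2, this, map_one, mul_one]
  refine ⟨c, ?_⟩
  have := minpoly.aeval K u
  rw [← hm, hlin] at this
  simp only [map_sub, Polynomial.aeval_X, Polynomial.aeval_C] at this
  exact sub_eq_zero.mp this
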